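/- arXiv:1410.7052 — 6 statements merged into one kernel-verified Lean document; each statement's English description precedes it below -/
import Mathlib

section
/- Let n ≥ 1 and let A be a real 4×n matrix. Let Δₙ denote the set of probability vectors in ℝⁿ, Δ₄ the set of probability vectors in ℝ⁴, and let P ⊆ Δ₄ be the set of product mixtures ((1−p₁)(1−p₂), (1−p₁)p₂, p₁(1−p₂), p₁p₂) over p₁, p₂ ∈ [0,1]. Then the upper value of the product-constrained game equals the value of the unconstrained game: the infimum over q ∈ Δₙ of the supremum over p ∈ P of pᵀ A q equals the supremum over p ∈ Δ₄ of the infimum over q ∈ Δₙ of pᵀ A q. -/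
open Matrix

/-- The product mixture `((1−p₁)(1−p₂), (1−p₁)p₂, p₁(1−p₂), p₁p₂)` in `ℝ⁴`. -/
noncomputable def prodMix (p₁ p₂ : ℝ) : Fin 4 → ℝ :=
  ![(1 - p₁) * (1 - p₂), (1 - p₁) * p₂, p₁ * (1 - p₂), p₁ * p₂]

/-- The set of product mixtures over `p₁, p₂ ∈ [0,1]`. -/
def productMixtures : Set (Fin 4 → ℝ) :=
  {p | ∃ p₁ ∈ Set.Icc (0 : ℝ) 1, ∃ p₂ ∈ Set.Icc (0 : ℝ) 1, p = prodMix p₁ p₂}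

section helpers
variable {ι : Type*} [Fintype ι] [Nonempty ι] [DecidableEq ι]
set_option linter.unusedSectionVars false

lemma dot_le_iSup (v : ι → ℝ) {p : ι → ℝ} (hp : p ∈ stdSimplex ℝ ι) :
    p ⬝ᵥ v ≤ ⨆ i, v i := by
  have hb : BddAbove (Set.range v) := (Set.finite_range v).bddAbove
  calc p ⬝ᵥ v = ∑ i, p i * v i := rfl
    _ ≤ ∑ i, p i * (⨆ j, v j) := Finset.sum_le_sum fun i _ =>
        mul_le_mul_of_nonneg_left (le_ciSup hb i) (hp.1 i)
    _ = ⨆ j, v j := by rw [← Finset.sum_mul, hp.2, one_mul]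

lemma iInf_le_dot (v : ι → ℝ) {p : ι → ℝ} (hp : p ∈ stdSimplex ℝ ι) :
    (⨅ i, v i) ≤ p ⬝ᵥ v := by
  have hb : BddBelow (Set.range v) := (Set.finite_range v).bddBelow
  calc (⨅ j, v j) = ∑ i, p i * (⨅ j, v j) := by rw [← Finset.sum_mul, hp.2, one_mul]
    _ ≤ ∑ i, p i * v i := Finset.sum_le_sum fun i _ =>
        mul_le_mul_of_nonneg_left (ciInf_le hb i) (hp.1 i)
    _ = p ⬝ᵥ v := rfl

end helpers

lemma minimax (n : ℕ) (hn : 1 ≤ n) (A : Matrix (Fin 4) (Fin n) ℝ) :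
    (⨅ q : stdSimplex ℝ (Fin n), ⨆ i, A.mulVec (q : Fin n → ℝ) i) =
      ⨆ p : stdSimplex ℝ (Fin 4), ⨅ q : stdSimplex ℝ (Fin n),
        (p : Fin 4 → ℝ) ⬝ᵥ A.mulVec (q : Fin n → ℝ) := by
  haveI : NeZero n := ⟨by omega⟩
  haveI hne4 : Nonempty (stdSimplex ℝ (Fin 4)) := ⟨⟨_, single_mem_stdSimplex ℝ 0⟩⟩
  haveI hnen : Nonempty (stdSimplex ℝ (Fin n)) := ⟨⟨_, single_mem_stdSimplex ℝ 0⟩⟩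
  set lo : ℝ := ⨅ i, ⨅ j, A i j with hlo
  set hi : ℝ := ⨆ i, ⨆ j, A i j with hhi
  -- entrywise bounds on A.mulVec q for q in the simplex
  have hrow_lo : ∀ (q : stdSimplex ℝ (Fin n)) (i : Fin 4), lo ≤ A.mulVec (q : Fin n → ℝ) i := by
    intro q i
    have h1 : (⨅ j, A i j) ≤ A.mulVec (q : Fin n → ℝ) i := by
      have : A.mulVec (q : Fin n → ℝ) i = (q : Fin n → ℝ) ⬝ᵥ (fun j => A i j) := by
        simp [Matrix.mulVec, dotProduct, mul_comm]
      rw [this]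
      exact iInf_le_dot _ q.2
    exact le_trans (ciInf_le ((Set.finite_range _).bddBelow) i) h1
  have hrow_hi : ∀ (q : stdSimplex ℝ (Fin n)) (i : Fin 4), A.mulVec (q : Fin n → ℝ) i ≤ hi := by
    intro q i
    have h1 : A.mulVec (q : Fin n → ℝ) i ≤ ⨆ j, A i j := by
      have : A.mulVec (q : Fin n → ℝ) i = (q : Fin n → ℝ) ⬝ᵥ (fun j => A i j) := by
        simp [Matrix.mulVec, dotProduct, mul_comm]
      rw [this]
      exact dot_le_iSup _ q.2
    exact le_trans h1 (le_ciSup (f := fun i => ⨆ j, A i j) ((Set.finite_range _).bddAbove) i)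
  set F : stdSimplex ℝ (Fin n) → ℝ := fun q => ⨆ i, A.mulVec (q : Fin n → ℝ) i with hF
  have hF_lo : ∀ q, lo ≤ F q := fun q =>
    le_trans (hrow_lo q 0) (le_ciSup ((Set.finite_range _).bddAbove) 0)
  have hF_hi : ∀ q, F q ≤ hi := fun q => ciSup_le fun i => hrow_hi q i
  set val : ℝ := ⨅ q, F q with hval
  have hFbdd : BddBelow (Set.range F) := ⟨lo, by rintro _ ⟨q, rfl⟩; exact hF_lo q⟩
  -- dot products bounded
  have hdot_lo : ∀ (p : stdSimplex ℝ (Fin 4)) (q : stdSimplex ℝ (Fin n)),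
      lo ≤ (p : Fin 4 → ℝ) ⬝ᵥ A.mulVec (q : Fin n → ℝ) := fun p q =>
    le_trans (le_ciInf fun i => hrow_lo q i) (iInf_le_dot _ p.2)
  have hinner_bdd : ∀ p : stdSimplex ℝ (Fin 4),
      BddBelow (Set.range fun q : stdSimplex ℝ (Fin n) =>
        (p : Fin 4 → ℝ) ⬝ᵥ A.mulVec (q : Fin n → ℝ)) := fun p =>
    ⟨lo, by rintro _ ⟨q, rfl⟩; exact hdot_lo p q⟩
  apply le_antisymm
  · -- strong direction via separation
    suffices h : ∃ p : stdSimplex ℝ (Fin 4), ∀ q : stdSimplex ℝ (Fin n),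
        val ≤ (p : Fin 4 → ℝ) ⬝ᵥ A.mulVec (q : Fin n → ℝ) by
      obtain ⟨p, hp⟩ := h
      have h1 : val ≤ ⨅ q : stdSimplex ℝ (Fin n),
          (p : Fin 4 → ℝ) ⬝ᵥ A.mulVec (q : Fin n → ℝ) := le_ciInf hp
      have hbddA : BddAbove (Set.range fun p : stdSimplex ℝ (Fin 4) =>
          ⨅ q : stdSimplex ℝ (Fin n), (p : Fin 4 → ℝ) ⬝ᵥ A.mulVec (q : Fin n → ℝ)) := by
        refine ⟨hi, ?_⟩
        rintro _ ⟨p', rfl⟩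
        exact le_trans (ciInf_le (hinner_bdd p') (Classical.arbitrary _))
          (le_trans (dot_le_iSup _ p'.2) (hF_hi _))
      exact le_trans h1 (le_ciSup hbddA p)
    -- separation argument
    classical
    set S : Set (Fin 4 → ℝ) := A.mulVec '' (stdSimplex ℝ (Fin n)) with hS
    have hcoe : ⇑A.mulVecLin = A.mulVec := funext fun v => A.mulVecLin_apply v
    have hSconv : Convex ℝ S := by
      have h := (convex_stdSimplex ℝ (Fin n)).linear_image A.mulVecLin
      rwa [hcoe] at h
    set O : Set (Fin 4 → ℝ) := ⋂ i, {x | x i < val} with hO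
    have hOconv : Convex ℝ O :=
      convex_iInter fun i => convex_halfSpace_lt ⟨fun a b => rfl, fun c a => rfl⟩ val
    have hOopen : IsOpen O :=
      isOpen_iInter_of_finite fun i => isOpen_lt (continuous_apply i) continuous_const
    have hdisj : Disjoint O S := by
      rw [Set.disjoint_left]
      rintro x hxO ⟨q, hq, rfl⟩
      have hvle : val ≤ ⨆ i, A.mulVec q i := ciInf_le hFbdd ⟨q, hq⟩
      obtain ⟨i₀, hi₀⟩ := exists_eq_ciSup_of_finite (f := fun i => A.mulVec q i)
      have hx : A.mulVec q i₀ < val := Set.mem_iInter.1 hxO i₀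
      linarith
    obtain ⟨f, u, hfO, hfS⟩ := geometric_hahn_banach_open hOconv hOopen hSconv hdisj
    set w : Fin 4 → ℝ := fun i => f (Pi.single i 1) with hwdef
    have hrep : ∀ x : Fin 4 → ℝ, f x = ∑ i, x i * w i := by
      intro x
      conv_lhs => rw [pi_eq_sum_univ x]
      rw [map_sum]
      refine Finset.sum_congr rfl fun i _ => ?_
      rw [_root_.map_smul, smul_eq_mul]
      congr 1
      have hsingle : (fun j => if i = j then (1:ℝ) else 0) = Pi.single i 1 := by
        ext j; simp [Pi.single_apply, eq_comm]
      rw [hsingle]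
    have hwnn : ∀ i, 0 ≤ w i := by
      intro i
      by_contra hneg
      push_neg at hneg
      have hwne : w i ≠ 0 := ne_of_lt hneg
      have hcm : (fun _ : Fin 4 => val - 1) ∈ O :=
        Set.mem_iInter.2 fun j => show (val - 1 : ℝ) < val by linarith
      have hfc : f (fun _ : Fin 4 => val - 1) < u := hfO _ hcm
      set c := f (fun _ : Fin 4 => val - 1) with hcdef
      set t : ℝ := (u - c + 1) / (-w i) with htdef
      have htpos : 0 < t := div_pos (by linarith) (by linarith)
      have hmem : ((fun _ : Fin 4 => val - 1) - t • (Pi.single i 1 : Fin 4 → ℝ)) ∈ O := by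
        refine Set.mem_iInter.2 fun j => ?_
        show ((fun _ : Fin 4 => val - 1) - t • (Pi.single i 1 : Fin 4 → ℝ)) j < val
        simp only [Pi.sub_apply, Pi.smul_apply, smul_eq_mul, Pi.single_apply]
        by_cases hji : j = i <;> simp [hji] <;> nlinarith
      have hval2 : f ((fun _ : Fin 4 => val - 1) - t • (Pi.single i 1 : Fin 4 → ℝ)) < u :=
        hfO _ hmem
      rw [map_sub, _root_.map_smul, smul_eq_mul] at hval2
      have hfw : f (Pi.single i 1 : Fin 4 → ℝ) = w i := rfl
      rw [hfw] at hval2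
      have ht1 : t * (-w i) = u - c + 1 := div_mul_cancel₀ _ (neg_ne_zero.2 hwne)
      rw [mul_neg] at ht1
      linarith
    set s : ℝ := ∑ i, w i with hsdef
    have hsnn : 0 ≤ s := Finset.sum_nonneg fun i _ => hwnn i
    have hspos : 0 < s := by
      rcases hsnn.lt_or_eq with h | h
      · exact h
      · exfalso
        have hall : ∀ i ∈ Finset.univ, w i = 0 :=
          (Finset.sum_eq_zero_iff_of_nonneg fun i _ => hwnn i).1 h.symm
        have hf0 : ∀ x, f x = 0 := fun x => by
          rw [hrep x]
          exact Finset.sum_eq_zero fun i hi => by rw [hall i (Finset.mem_univ i), mul_zero]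
        set q₀ : stdSimplex ℝ (Fin n) := Classical.arbitrary _
        have h1 : u ≤ 0 := by
          have := hfS (A.mulVec (q₀ : Fin n → ℝ)) ⟨(q₀ : Fin n → ℝ), q₀.2, rfl⟩
          rwa [hf0] at this
        have h2 : (0:ℝ) < u := by
          have hm : (fun _ : Fin 4 => val - 1) ∈ O :=
            Set.mem_iInter.2 fun j => by simp only [Set.mem_setOf_eq]; linarith
          have := hfO _ hm
          rwa [hf0] at this
        linarith
    have hu : val * s ≤ u := by
      by_contra hlt
      push_neg at hlt
      set ε : ℝ := (val * s - u) / s with hεdef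
      have hεpos : 0 < ε := div_pos (by linarith) hspos
      have hmem : (fun _ : Fin 4 => val - ε) ∈ O :=
        Set.mem_iInter.2 fun j => by simp only [Set.mem_setOf_eq]; linarith
      have h1 : f (fun _ : Fin 4 => val - ε) < u := hfO _ hmem
      have h2 : f (fun _ : Fin 4 => val - ε) = (val - ε) * s := by
        rw [hrep, hsdef, Finset.mul_sum]
      have h3 : ε * s = val * s - u := by
        rw [hεdef, div_mul_cancel₀ _ (ne_of_gt hspos)]
      nlinarith
    refine ⟨⟨fun i => w i / s, fun i => div_nonneg (hwnn i) hsnn, ?_⟩, ?_⟩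
    · rw [← Finset.sum_div, ← hsdef, div_self (ne_of_gt hspos)]
    · intro q
      have hfq : u ≤ f (A.mulVec (q : Fin n → ℝ)) :=
        hfS _ ⟨(q : Fin n → ℝ), q.2, rfl⟩
      have hdot : (fun i => w i / s) ⬝ᵥ A.mulVec (q : Fin n → ℝ)
          = f (A.mulVec (q : Fin n → ℝ)) / s := by
        rw [hrep, Finset.sum_div]
        exact Finset.sum_congr rfl fun i _ => by ring
      show val ≤ (fun i => w i / s) ⬝ᵥ A.mulVec (q : Fin n → ℝ)
      rw [hdot, le_div_iff₀ hspos]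
      exact le_trans hu hfq
  · -- weak direction
    refine ciSup_le fun p => le_ciInf fun q => ?_
    exact le_trans (ciInf_le (hinner_bdd p) q) (dot_le_iSup _ p.2)

lemma productMixtures_subset : productMixtures ⊆ stdSimplex ℝ (Fin 4) := by
  rintro p ⟨p₁, ⟨h10, h11⟩, p₂, ⟨h20, h21⟩, rfl⟩
  constructor
  · intro i
    fin_cases i <;> simp [prodMix] <;> nlinarith
  · simp [Fin.sum_univ_four, prodMix]
    ring

lemma single_mem_productMixtures (i : Fin 4) : (Pi.single i 1 : Fin 4 → ℝ) ∈ productMixtures := by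
  fin_cases i
  · exact ⟨0, ⟨le_refl _, zero_le_one⟩, 0, ⟨le_refl _, zero_le_one⟩, by
      ext j; fin_cases j <;> simp [prodMix, Pi.single_apply]⟩
  · exact ⟨0, ⟨le_refl _, zero_le_one⟩, 1, ⟨zero_le_one, le_refl _⟩, by
      ext j; fin_cases j <;> simp [prodMix, Pi.single_apply]⟩
  · exact ⟨1, ⟨zero_le_one, le_refl _⟩, 0, ⟨le_refl _, zero_le_one⟩, by
      ext j; fin_cases j <;> simp [prodMix, Pi.single_apply]⟩
  · exact ⟨1, ⟨zero_le_one, le_refl _⟩, 1, ⟨zero_le_one, le_refl _⟩, by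
      ext j; fin_cases j <;> simp [prodMix, Pi.single_apply]⟩

lemma single_dot {ι : Type*} [Fintype ι] [DecidableEq ι] (i : ι) (v : ι → ℝ) :
    (Pi.single i 1 : ι → ℝ) ⬝ᵥ v = v i := by
  simp [dotProduct, Pi.single_apply]

lemma iSup_productMixtures_dot (v : Fin 4 → ℝ) :
    (⨆ p : productMixtures, (p : Fin 4 → ℝ) ⬝ᵥ v) = ⨆ i, v i := by
  haveI hne : Nonempty productMixtures := ⟨⟨_, single_mem_productMixtures 0⟩⟩
  have hbdd : BddAbove (Set.range fun p : productMixtures => (p : Fin 4 → ℝ) ⬝ᵥ v) := by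
    refine ⟨⨆ i, v i, ?_⟩
    rintro _ ⟨p, rfl⟩
    exact dot_le_iSup v (productMixtures_subset p.2)
  apply le_antisymm
  · exact ciSup_le fun p => dot_le_iSup v (productMixtures_subset p.2)
  · refine ciSup_le fun i => ?_
    have h := le_ciSup hbdd (⟨Pi.single i 1, single_mem_productMixtures i⟩ : productMixtures)
    simpa [single_dot] using h

/-- The upper value of the product-constrained game equals the value of the
unconstrained game. -/
theorem upperValue_eq_unconstrainedValue (n : ℕ) (hn : 1 ≤ n)
    (A : Matrix (Fin 4) (Fin n) ℝ) :
    (⨅ q : stdSimplex ℝ (Fin n), ⨆ p : productMixtures,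
        (p : Fin 4 → ℝ) ⬝ᵥ A.mulVec (q : Fin n → ℝ)) =
      ⨆ p : stdSimplex ℝ (Fin 4), ⨅ q : stdSimplex ℝ (Fin n),
        (p : Fin 4 → ℝ) ⬝ᵥ A.mulVec (q : Fin n → ℝ) := by
  calc (⨅ q : stdSimplex ℝ (Fin n), ⨆ p : productMixtures,
        (p : Fin 4 → ℝ) ⬝ᵥ A.mulVec (q : Fin n → ℝ))
      = ⨅ q : stdSimplex ℝ (Fin n), ⨆ i, A.mulVec (q : Fin n → ℝ) i :=
        iInf_congr fun q => iSup_productMixtures_dot (A.mulVec (q : Fin n → ℝ))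
    _ = ⨆ p : stdSimplex ℝ (Fin 4), ⨅ q : stdSimplex ℝ (Fin n),
        (p : Fin 4 → ℝ) ⬝ᵥ A.mulVec (q : Fin n → ℝ) := minimax n hn A
end

section
/- Let p* = (0, 110/543, 110/543, 323/543) and q* = (0, 671/5792, 671/5792, 2225/2896), and let v = −16655514960/(181·13⁹). Then (p*, q*) is a saddle point of the matrix game with payoff matrix A: for every column index j, (p*ᵀA)ⱼ ≥ v, and for every row index i, (A q*)ᵢ ≤ v; consequently p*ᵀ A q* = v, and v is the value of the game. -/
open Matrix

/-- The 4×4 kernel matrix of the correlated cooperative game at θ = 1/2. -/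
noncomputable def kernelMatrix : Matrix (Fin 4) (Fin 4) ℝ :=
  (-(8 / 13 ^ 9 : ℝ)) •
    !![11815316, 11681780, 11681780, 11548244;
       11621229, 11427789, 11680301, 11486861;
       11621229, 11680301, 11427789, 11486861;
       11421510, 11467270, 11467270, 11513030]

/-- `(p*, q*)` is a saddle point of the game with payoff matrix `A`, with value
`v = −16655514960/(181·13⁹)`. -/
theorem saddle_point_qstar :
    let pstar : Fin 4 → ℝ := ![0, 110 / 543, 110 / 543, 323 / 543]
    let qstar : Fin 4 → ℝ := ![0, 671 / 5792, 671 / 5792, 2225 / 2896]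
    let v : ℝ := -16655514960 / (181 * 13 ^ 9)
    (∀ j, v ≤ Matrix.vecMul pstar kernelMatrix j) ∧
      (∀ i, kernelMatrix.mulVec qstar i ≤ v) ∧
      pstar ⬝ᵥ kernelMatrix.mulVec qstar = v := by
  intro pstar qstar v
  refine ⟨fun j => ?_, fun i => ?_, ?_⟩
  · fin_cases j <;>
      simp [pstar, v, kernelMatrix, vecMul, dotProduct, Fin.sum_univ_four] <;> norm_num
  · fin_cases i <;>
      simp [qstar, v, kernelMatrix, mulVec, dotProduct, Fin.sum_univ_four] <;> norm_num
  · simp [pstar, qstar, v, kernelMatrix, mulVec, dotProduct, Fin.sum_univ_four]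
    norm_num
end

section
/- Let p* = (0, 110/543, 110/543, 323/543) and q** = (671/5792, 0, 0, 5121/5792), and let v = −16655514960/(181·13⁹). Then (p*, q**) is a saddle point of the matrix game with payoff matrix A: for every column index j, (p*ᵀA)ⱼ ≥ v, and for every row index i, (A q**)ᵢ ≤ v; consequently p*ᵀ A q** = v. -/
open Matrix

/-- `(p*, q**)` is a saddle point of the game with payoff matrix `A`, with value
`v = −16655514960/(181·13⁹)`. -/
theorem saddle_point_qstarstar :
    let pstar : Fin 4 → ℝ := ![0, 110 / 543, 110 / 543, 323 / 543]
    let qstarstar : Fin 4 → ℝ := ![671 / 5792, 0, 0, 5121 / 5792]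
    let v : ℝ := -16655514960 / (181 * 13 ^ 9)
    (∀ j, v ≤ Matrix.vecMul pstar kernelMatrix j) ∧
      (∀ i, kernelMatrix.mulVec qstarstar i ≤ v) ∧
      pstar ⬝ᵥ kernelMatrix.mulVec qstarstar = v := by
  refine ⟨?_, ?_, ?_⟩
  · intro j
    fin_cases j <;>
      simp [kernelMatrix, vecMul, mulVec, dotProduct, Fin.sum_univ_four,
        Matrix.smul_apply] <;> norm_num
  · intro i
    fin_cases i <;>
      simp [kernelMatrix, vecMul, mulVec, dotProduct, Fin.sum_univ_four,
        Matrix.smul_apply] <;> norm_num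
  · simp [kernelMatrix, vecMul, mulVec, dotProduct, Fin.sum_univ_four,
      Matrix.smul_apply]
    norm_num
end

section
/- Let p* = (√245569 − 319)/224 and let r = ((1−p*)², (1−p*)p*, p*(1−p*), p*²) ∈ ℝ⁴. Then r ᵀ A has all four coordinates equal to v̲ = 5(260493·√245569 − 1933207795)/(98·13⁹); that is, the independent product strategy with p₁ = p₂ = p* equalizes Banker's four pure strategies, and the common payoff v̲ is the lower value of the game at θ = 1/2. -/
open Matrix

/-- The independent product strategy with `p₁ = p₂ = (√245569 − 319)/224`
equalizes Banker's four pure strategies, with common payoff equal to the lower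
value `5(260493·√245569 − 1933207795)/(98·13⁹)`. -/
theorem equalizing_product_strategy :
    let pstar : ℝ := (Real.sqrt 245569 - 319) / 224
    let r : Fin 4 → ℝ :=
      ![(1 - pstar) * (1 - pstar), (1 - pstar) * pstar,
        pstar * (1 - pstar), pstar * pstar]
    let vlow : ℝ := 5 * (260493 * Real.sqrt 245569 - 1933207795) / (98 * 13 ^ 9)
    ∀ j, Matrix.vecMul r kernelMatrix j = vlow := by
  intro pstar r vlow j
  have hs : Real.sqrt 245569 * Real.sqrt 245569 = 245569 :=
    Real.mul_self_sqrt (by norm_num)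
  fin_cases j <;>
    simp only [kernelMatrix, Matrix.vecMul, dotProduct, Fin.sum_univ_four,
      Matrix.smul_apply, Matrix.cons_val', Matrix.cons_val_zero, Matrix.cons_val_one,
      Matrix.head_cons, Matrix.empty_val', Matrix.cons_val_fin_one, Matrix.head_fin_const,
      Matrix.cons_val_two, Matrix.cons_val_three, Matrix.tail_cons, smul_eq_mul, Matrix.of_apply, Fin.isValue, Fin.reduceFinMk, r, pstar, vlow] <;>
    field_simp <;> nlinarith [hs, Real.sqrt_nonneg (245569:ℝ)]
end

section
/- The real number 5(260493·√245569 − 1933207795)/(98·13⁹) is strictly less than −16655514960/(181·13⁹). (Hence at θ = 1/2 the lower value of the independence-constrained cooperative game, approximately −0.00867999, is strictly smaller than the upper value, approximately −0.008677394, so the independent cooperative equilibrium does not exist at θ = 1/2.) -/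
/-- At θ = 1/2 the lower value of the independence-constrained cooperative game
is strictly smaller than the upper (correlated cooperative) value. -/
theorem lowerValue_lt_upperValue :
    5 * (260493 * Real.sqrt 245569 - 1933207795) / (98 * 13 ^ 9)
      < (-16655514960 : ℝ) / (181 * 13 ^ 9) := by
  have h : Real.sqrt 245569 < 495.55 := by
    rw [show (495.55 : ℝ) = Real.sqrt (495.55 ^ 2) by
      rw [Real.sqrt_sq]; norm_num]
    apply Real.sqrt_lt_sqrt <;> norm_num
  rw [div_lt_div_iff₀ (by norm_num) (by norm_num)]
  nlinarith [h]
end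

section
/- For q ∈ ℝ⁸ define the behavioral draw probabilities b₁ = q₅ + q₆ + q₇ + q₈ (draw on (10,10,6)), b₂ = q₃ + q₄ + q₇ + q₈ (draw on (10,11,6)), b₃ = q₂ + q₄ + q₆ + q₈ (draw on (11,10,6)). Then for each of the eleven extreme Nash-equilibrium vectors q listed in the paper, one has b₂ = b₃, and there exists t ∈ [0,1] with (b₁, b₂) = t·(0, 6715965/10469888) + (1−t)·(2238655/3807232, 0); that is, all eleven equilibria induce behavioral strategies of the form (r₁, r₂, r₂) lying on the segment between the two extreme behavioral strategies (0, 6715965/10469888, 6715965/10469888) and (2238655/3807232, 0, 0). -/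
/-- The eleven extreme Nash-equilibrium Banker strategies at θ = 1/2. -/
noncomputable def extremeBankerStrategies : List (Fin 8 → ℝ) :=
  [![0, 15175619 / 33313280, 15175619 / 33313280, 0, 0, 0, 0, 1481021 / 16656640],
   ![0, 1 / 2, 4229827 / 11421696, 0, 0, 0, 1481021 / 11421696, 0],
   ![0, 4229827 / 11421696, 1 / 2, 0, 0, 1481021 / 11421696, 0, 0],
   ![0, 4705731 / 12373504, 4705731 / 12373504, 0, 1481021 / 6186752, 0, 0, 0],
   ![0, 3753923 / 10469888, 3753923 / 10469888, 1481021 / 5234944, 0, 0, 0, 0],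
   ![15175619 / 21891584, 0, 0, 0, 0, 0, 0, 6715965 / 21891584],
   ![1988135 / 3331328, 0, 0, 0, 0, 1343193 / 6662656, 1343193 / 6662656, 0],
   ![1568577 / 3807232, 0, 0, 0, 2238655 / 3807232, 0, 0, 0],
   ![3753923 / 10469888, 0, 0, 6715965 / 10469888, 0, 0, 0, 0],
   ![4229827 / 10945792, 0, 6715965 / 21891584, 0, 0, 6715965 / 21891584, 0, 0],
   ![4229827 / 10945792, 6715965 / 21891584, 0, 0, 0, 0, 6715965 / 21891584, 0]]

/-- Probability of drawing on `(10,10,6)`. -/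
noncomputable def drawProb1 (q : Fin 8 → ℝ) : ℝ := q 4 + q 5 + q 6 + q 7

/-- Probability of drawing on `(10,11,6)`. -/
noncomputable def drawProb2 (q : Fin 8 → ℝ) : ℝ := q 2 + q 3 + q 6 + q 7

/-- Probability of drawing on `(11,10,6)`. -/
noncomputable def drawProb3 (q : Fin 8 → ℝ) : ℝ := q 1 + q 3 + q 5 + q 7

lemma dp1 (a b c d e f g h : ℝ) : drawProb1 ![a,b,c,d,e,f,g,h] = e+f+g+h := rfl
lemma dp2 (a b c d e f g h : ℝ) : drawProb2 ![a,b,c,d,e,f,g,h] = c+d+g+h := rfl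
lemma dp3 (a b c d e f g h : ℝ) : drawProb3 ![a,b,c,d,e,f,g,h] = b+d+f+h := rfl

/-- All eleven extreme Nash equilibria induce behavioral strategies of the form
`(r₁, r₂, r₂)` lying on the segment between the two extreme behavioral
strategies `(0, 6715965/10469888, 6715965/10469888)` and
`(2238655/3807232, 0, 0)`. -/
theorem behavioral_strategies_on_segment :
    ∀ q ∈ extremeBankerStrategies,
      drawProb2 q = drawProb3 q ∧
      ∃ t ∈ Set.Icc (0 : ℝ) 1,
        drawProb1 q = t * 0 + (1 - t) * (2238655 / 3807232) ∧
        drawProb2 q = t * (6715965 / 10469888) + (1 - t) * 0 := by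
  intro q hq
  simp only [extremeBankerStrategies, List.mem_cons, List.not_mem_nil, or_false] at hq
  rcases hq with rfl|rfl|rfl|rfl|rfl|rfl|rfl|rfl|rfl|rfl|rfl
  · exact ⟨by norm_num [dp2, dp3], (66504757:ℝ)/78352925, ⟨by norm_num, by norm_num⟩, by norm_num [dp1], by norm_num [dp2]⟩
  · exact ⟨by norm_num [dp2, dp3], (5234944:ℝ)/6715965, ⟨by norm_num, by norm_num⟩, by norm_num [dp1], by norm_num [dp2]⟩
  · exact ⟨by norm_num [dp2, dp3], (5234944:ℝ)/6715965, ⟨by norm_num, by norm_num⟩, by norm_num [dp1], by norm_num [dp2]⟩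
  · exact ⟨by norm_num [dp2, dp3], (17254347:ℝ)/29102515, ⟨by norm_num, by norm_num⟩, by norm_num [dp1], by norm_num [dp2]⟩
  · exact ⟨by norm_num [dp2, dp3], (1:ℝ), ⟨by norm_num, by norm_num⟩, by norm_num [dp1], by norm_num [dp2]⟩
  · exact ⟨by norm_num [dp2, dp3], (11:ℝ)/23, ⟨by norm_num, by norm_num⟩, by norm_num [dp1], by norm_num [dp2]⟩
  · exact ⟨by norm_num [dp2, dp3], (11:ℝ)/35, ⟨by norm_num, by norm_num⟩, by norm_num [dp1], by norm_num [dp2]⟩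
  · exact ⟨by norm_num [dp2, dp3], (0:ℝ), ⟨by norm_num, by norm_num⟩, by norm_num [dp1], by norm_num [dp2]⟩
  · exact ⟨by norm_num [dp2, dp3], (1:ℝ), ⟨by norm_num, by norm_num⟩, by norm_num [dp1], by norm_num [dp2]⟩
  · exact ⟨by norm_num [dp2, dp3], (11:ℝ)/23, ⟨by norm_num, by norm_num⟩, by norm_num [dp1], by norm_num [dp2]⟩
  · exact ⟨by norm_num [dp2, dp3], (11:ℝ)/23, ⟨by norm_num, by norm_num⟩, by norm_num [dp1], by norm_num [dp2]⟩
end
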